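/- arXiv:1002.0012 — 2 statements merged into one kernel-verified Lean document; each statement's English description precedes it below -/
import Mathlib

section
/- The 105th cyclotomic polynomial Φ_105 has a coefficient not in {-1, 0, 1}. -/
/-! For a prime `p ∤ n` one has `Φₙ(Xᵖ) = Φₙₚ(X) Φₙ(X)`, so `Φ₁₅` and then `Φ₁₀₅` are obtained from
`Φ₃ = X² + X + 1` by exact division. The coefficient of `X⁷` in `Φ₁₀₅` is `-2`. -/

open Polynomial

theorem cyclotomic_mul_prime_eq_of_expand_eq {R : Type*} [CommRing R] [IsDomain R] {p n : ℕ}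
    (hp : p.Prime) (hpn : ¬p ∣ n) {Q : R[X]}
    (h : expand R p (cyclotomic n R) = Q * cyclotomic n R) : cyclotomic (n * p) R = Q :=
  mul_right_cancel₀ (cyclotomic_ne_zero n R) <| by
    rw [← cyclotomic_expand_eq_cyclotomic_mul hp hpn, h]

theorem cyclotomic_fifteen_int :
    cyclotomic 15 ℤ = 1 - X + X ^ 3 - X ^ 4 + X ^ 5 - X ^ 7 + X ^ 8 :=
  cyclotomic_mul_prime_eq_of_expand_eq (n := 3) Nat.prime_five (by norm_num) <| by
    rw [cyclotomic_three]
    simp only [map_add, map_one, map_pow, expand_X]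
    ring

theorem cyclotomic_one_hundred_five_int :
    cyclotomic 105 ℤ =
      1 + X + X ^ 2 - X ^ 5 - X ^ 6 - 2 * X ^ 7 - X ^ 8 - X ^ 9 + X ^ 12 + X ^ 13 + X ^ 14
        + X ^ 15 + X ^ 16 + X ^ 17 - X ^ 20 - X ^ 22 - X ^ 24 - X ^ 26 - X ^ 28 + X ^ 31
        + X ^ 32 + X ^ 33 + X ^ 34 + X ^ 35 + X ^ 36 - X ^ 39 - X ^ 40 - 2 * X ^ 41 - X ^ 42
        - X ^ 43 + X ^ 46 + X ^ 47 + X ^ 48 :=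
  cyclotomic_mul_prime_eq_of_expand_eq (n := 15) Nat.prime_seven (by norm_num) <| by
    rw [cyclotomic_fifteen_int]
    simp only [map_add, map_sub, map_one, map_pow, expand_X]
    ring

theorem coeff_cyclotomic_one_hundred_five_int_seven : (cyclotomic 105 ℤ).coeff 7 = -2 := by
  rw [cyclotomic_one_hundred_five_int]
  simp [coeff_X_pow, coeff_one, coeff_X]

theorem stmt_5 : ∃ i : ℕ, (cyclotomic 105 ℤ).coeff i ∉ ({-1, 0, 1} : Set ℤ) :=
  ⟨7, by rw [coeff_cyclotomic_one_hundred_five_int_seven]; norm_num⟩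
end

section
/- If f ∈ ℤ[x] is monic and all complex roots of the Graeffe transform g = f_e² - x·f_o² of f are roots of unity, then all complex roots of f are roots of unity. -/
open Polynomial

/-- The even part of a polynomial: `f_e = Σ a_{2i} x^i`. -/
noncomputable def evenPart {R : Type*} [CommRing R] (f : R[X]) : R[X] :=
  ∑ i ∈ Finset.range (f.natDegree + 1), C (f.coeff (2 * i)) * X ^ i

/-- The odd part of a polynomial: `f_o = Σ a_{2i+1} x^i`. -/
noncomputable def oddPart {R : Type*} [CommRing R] (f : R[X]) : R[X] :=
  ∑ i ∈ Finset.range (f.natDegree + 1), C (f.coeff (2 * i + 1)) * X ^ i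

/-! `f(z) f(-z) = g(z²)`, so every root `z` of `f` has `z²` a root of the Graeffe transform `g`;
if `(z²)^m = 1` then `z^(2m) = 1`. -/

lemma Finset.sum_range_two_mul {M : Type*} [AddCommMonoid M] (a : ℕ → M) (n : ℕ) :
    ∑ j ∈ range (2 * n), a j = ∑ i ∈ range n, (a (2 * i) + a (2 * i + 1)) := by
  induction n with
  | zero => simp
  | succ n ih =>
    rw [Nat.mul_succ, sum_range_succ, sum_range_succ, sum_range_succ, ← ih]
    abel

section Graeffe

variable {R A : Type*} [CommRing R] [CommRing A] [Algebra R A]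

lemma aeval_sq_evenPart_add_mul_aeval_sq_oddPart (f : R[X]) (z : A) :
    aeval (z ^ 2) (evenPart f) + z * aeval (z ^ 2) (oddPart f) = aeval z f := by
  rw [aeval_eq_sum_range' (p := f) (n := 2 * (f.natDegree + 1)) (by omega),
    Finset.sum_range_two_mul]
  simp only [evenPart, oddPart, map_sum, map_mul, map_pow, aeval_C, aeval_X, Finset.mul_sum,
    ← Finset.sum_add_distrib, Algebra.smul_def]
  refine Finset.sum_congr rfl fun i _ => ?_
  ring

lemma aeval_mul_aeval_neg (f : R[X]) (z : A) :
    aeval z f * aeval (-z) f = aeval (z ^ 2) (evenPart f ^ 2 - X * oddPart f ^ 2) := by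
  rw [← aeval_sq_evenPart_add_mul_aeval_sq_oddPart f z,
    ← aeval_sq_evenPart_add_mul_aeval_sq_oddPart f (-z), neg_sq]
  simp only [map_sub, map_mul, map_pow, aeval_X]
  ring

end Graeffe

theorem stmt_19_general (f : ℤ[X])
    (hg : ∀ z : ℂ, aeval z (evenPart f ^ 2 - X * oddPart f ^ 2) = 0 →
      ∃ m : ℕ, 0 < m ∧ z ^ m = 1) :
    ∀ z : ℂ, aeval z f = 0 → ∃ m : ℕ, 0 < m ∧ z ^ m = 1 := by
  intro z hz
  obtain ⟨m, hm, hzm⟩ := hg (z ^ 2) (by rw [← aeval_mul_aeval_neg, hz, zero_mul])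
  exact ⟨2 * m, by omega, by rwa [pow_mul]⟩

theorem stmt_19 (f : ℤ[X]) (hf : f.Monic)
    (hg : ∀ z : ℂ, aeval z (evenPart f ^ 2 - X * oddPart f ^ 2) = 0 →
      ∃ m : ℕ, 0 < m ∧ z ^ m = 1) :
    ∀ z : ℂ, aeval z f = 0 → ∃ m : ℕ, 0 < m ∧ z ^ m = 1 :=
  stmt_19_general f hg
end
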